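/- If g : ℝⁿ → ℝⁿ is an invertible linear map satisfying g(cone(A')) ⊆ C and q = (gᵀ)⁻¹ satisfies q(cone(B')) ⊆ C*, where cone(A') = C and cone(B') = C*, for a regular convex cone C, then g(C) = C, i.e., g is an automorphism of C, and q is an automorphism of C*. -/

import Mathlib

open scoped InnerProductSpace

/-- The dual cone of a set in a real inner product space. -/
def dualCone {n : ℕ} (C : Set (EuclideanSpace ℝ (Fin n))) : Set (EuclideanSpace ℝ (Fin n)) :=
  {y | ∀ x ∈ C, 0 ≤ ⟪x, y⟫_ℝ}

/-- The closed conic hull of a set. -/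
def coneHull {n : ℕ} (S : Set (EuclideanSpace ℝ (Fin n))) : Set (EuclideanSpace ℝ (Fin n)) :=
  closure {x | ∃ c : ℝ, 0 ≤ c ∧ ∃ y ∈ convexHull ℝ S, x = c • y}

lemma dualCone_eq_innerDualCone {n : ℕ} (S : Set (EuclideanSpace ℝ (Fin n))) :
    dualCone S = (ProperCone.innerDual S : Set (EuclideanSpace ℝ (Fin n))) := rfl

lemma dualCone_antitone {n : ℕ} {S T : Set (EuclideanSpace ℝ (Fin n))} (h : S ⊆ T) :
    dualCone T ⊆ dualCone S := fun _ hy x hx => hy x (h hx)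

/-- Bipolar theorem for a nonempty closed convex cone given as a set. -/
lemma bipolar {n : ℕ} (C : Set (EuclideanSpace ℝ (Fin n)))
    (hclosed : IsClosed C) (hconv : Convex ℝ C)
    (hcone : ∀ (c : ℝ), 0 < c → ∀ x ∈ C, c • x ∈ C)
    (hne : C.Nonempty) : dualCone (dualCone C) = C := by
  let K : ConvexCone ℝ (EuclideanSpace ℝ (Fin n)) :=
    { carrier := C
      smul_mem' := fun c hc x hx => hcone c hc x hx
      add_mem' := by
        intro x hx y hy
        have h2 : (2 : ℝ) • ((1/2 : ℝ) • x + (1/2 : ℝ) • y) ∈ C := by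
          apply hcone 2 (by norm_num)
          exact hconv hx hy (by norm_num) (by norm_num) (by norm_num)
        have : (2 : ℝ) • ((1/2 : ℝ) • x + (1/2 : ℝ) • y) = x + y := by
          rw [smul_add, smul_smul, smul_smul]; norm_num
        rwa [this] at h2 }
  have := ProperCone.innerDual_innerDual (⟨K.toPointedCone (ConvexCone.Pointed.of_nonempty_of_isClosed (C := K) hne hclosed), hclosed⟩ : ProperCone ℝ (EuclideanSpace ℝ (Fin n)))
  rw [dualCone_eq_innerDualCone, dualCone_eq_innerDualCone]
  exact congrArg SetLike.coe this

theorem stmt_1 {n : ℕ} (C : Set (EuclideanSpace ℝ (Fin n)))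
    (hclosed : IsClosed C) (hconv : Convex ℝ C)
    (hcone : ∀ (c : ℝ), 0 < c → ∀ x ∈ C, c • x ∈ C)
    (hpointed : ∀ x ∈ C, -x ∈ C → x = 0)
    (hfull : (interior C).Nonempty)
    (A' B' : Set (EuclideanSpace ℝ (Fin n)))
    (hA' : coneHull A' = C) (hB' : coneHull B' = dualCone C)
    (g q : EuclideanSpace ℝ (Fin n) ≃ₗ[ℝ] EuclideanSpace ℝ (Fin n))
    (hq : q.toLinearMap.comp (LinearMap.adjoint g.toLinearMap) = LinearMap.id)
    (hgA : ⇑g '' coneHull A' ⊆ C)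
    (hqB : ⇑q '' coneHull B' ⊆ dualCone C) :
    ⇑g '' C = C ∧ ⇑q '' dualCone C = dualCone C := by
  rw [hA'] at hgA
  rw [hB'] at hqB
  set A : EuclideanSpace ℝ (Fin n) →ₗ[ℝ] EuclideanSpace ℝ (Fin n) :=
    LinearMap.adjoint g.toLinearMap with hA
  -- q ∘ A = id pointwise
  have hqA : ∀ z, q (A z) = z := fun z => LinearMap.ext_iff.mp hq z
  have hAq : ∀ y, A (q y) = y := by
    intro y
    apply q.injective
    rw [hqA]
  -- inner product relations
  have hinner : ∀ x y : EuclideanSpace ℝ (Fin n), ⟪x, A y⟫_ℝ = ⟪g x, y⟫_ℝ := by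
    intro x y
    exact LinearMap.adjoint_inner_right g.toLinearMap x y
  -- dualCone (g '' C) = q '' dualCone C
  have hdual : dualCone (⇑g '' C) = ⇑q '' dualCone C := by
    ext y
    constructor
    · intro hy
      refine ⟨A y, ?_, hqA y⟩
      intro x hx
      rw [hinner]
      exact hy (g x) ⟨x, hx, rfl⟩
    · rintro ⟨z, hz, rfl⟩
      rintro _ ⟨x, hx, rfl⟩
      have : ⟪x, A (q z)⟫_ℝ = ⟪g x, q z⟫_ℝ := hinner x (q z)
      rw [hAq] at this
      rw [← this]
      exact hz x hx
  -- C is nonempty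
  have hne : C.Nonempty := hfull.mono interior_subset
  -- g '' C properties
  have hgC_closed : IsClosed (⇑g '' C) := by
    have hg : IsClosedMap ⇑g := by
      have : Continuous ⇑g.symm := g.symm.toLinearMap.continuous_of_finiteDimensional
      exact (Homeomorph.mk g.toEquiv g.toLinearMap.continuous_of_finiteDimensional
        this).isClosedMap
    exact hg C hclosed
  have hgC_conv : Convex ℝ (⇑g '' C) := hconv.linear_image g.toLinearMap
  have hgC_cone : ∀ (c : ℝ), 0 < c → ∀ x ∈ ⇑g '' C, c • x ∈ ⇑g '' C := by
    rintro c hc _ ⟨x, hx, rfl⟩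
    exact ⟨c • x, hcone c hc x hx, map_smul g c x⟩
  have hgC_ne : (⇑g '' C).Nonempty := hne.image _
  -- bipolar argument: C ⊆ g '' C
  have hsub : C ⊆ ⇑g '' C := by
    have h1 : dualCone (⇑g '' C) ⊆ dualCone C := by
      rw [hdual]; exact hqB
    have h2 := dualCone_antitone h1
    rw [bipolar C hclosed hconv hcone hne,
      bipolar (⇑g '' C) hgC_closed hgC_conv hgC_cone hgC_ne] at h2
    exact h2
  have hgCeq : ⇑g '' C = C := Set.Subset.antisymm hgA hsub
  refine ⟨hgCeq, ?_⟩
  rw [← hdual, hgCeq]
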